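/- For the helicoidal surface with spacelike axis generated by a Lorentzian circle, X(s,t) = (ht, λ cosh t + μ sinh t + r cosh(s+t+θ), λ sinh t + μ cosh t + r sinh(s+t+θ)) with r > 0 and h ≠ 0, the numerator of the mean curvature equals h r²·(-λ² + μ² + h² - rλ cosh(s+θ) + rμ sinh(s+θ)); consequently the surface has H = 0 identically only if λ = μ = 0 and h = 0, which is impossible, so the surface is never minimal. -/

import Mathlib

noncomputable section

/-- Lorentzian inner product on Minkowski 3-space. -/
def mink (u v : ℝ × ℝ × ℝ) : ℝ := u.1 * v.1 + u.2.1 * v.2.1 - u.2.2 * v.2.2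

/-- Determinant of the 3×3 matrix with columns `u,v,w`. -/
def det3 (u v w : ℝ × ℝ × ℝ) : ℝ :=
  u.1 * (v.2.1 * w.2.2 - v.2.2 * w.2.1)
    - u.2.1 * (v.1 * w.2.2 - v.2.2 * w.1)
    + u.2.2 * (v.1 * w.2.1 - v.2.1 * w.1)

/-- Partial derivative with respect to the first parameter. -/
def pd1 (X : ℝ → ℝ → ℝ × ℝ × ℝ) : ℝ → ℝ → ℝ × ℝ × ℝ := fun s t => deriv (fun u => X u t) s

/-- Partial derivative with respect to the second parameter. -/
def pd2 (X : ℝ → ℝ → ℝ × ℝ × ℝ) : ℝ → ℝ → ℝ × ℝ × ℝ := fun s t => deriv (fun u => X s u) t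

def Ecoef (X : ℝ → ℝ → ℝ × ℝ × ℝ) (s t : ℝ) : ℝ := mink (pd1 X s t) (pd1 X s t)
def Fcoef (X : ℝ → ℝ → ℝ × ℝ × ℝ) (s t : ℝ) : ℝ := mink (pd1 X s t) (pd2 X s t)
def Gcoef (X : ℝ → ℝ → ℝ × ℝ × ℝ) (s t : ℝ) : ℝ := mink (pd2 X s t) (pd2 X s t)

/-- `W = EG - F²`. -/
def Wform (X : ℝ → ℝ → ℝ × ℝ × ℝ) (s t : ℝ) : ℝ :=
  Ecoef X s t * Gcoef X s t - Fcoef X s t ^ 2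

/-- Numerator `H₁ = G·det(Xs,Xt,Xss) - 2F·det(Xs,Xt,Xst) + E·det(Xs,Xt,Xtt)`. -/
def H1 (X : ℝ → ℝ → ℝ × ℝ × ℝ) (s t : ℝ) : ℝ :=
  Gcoef X s t * det3 (pd1 X s t) (pd2 X s t) (pd1 (pd1 X) s t)
    - 2 * Fcoef X s t * det3 (pd1 X s t) (pd2 X s t) (pd2 (pd1 X) s t)
    + Ecoef X s t * det3 (pd1 X s t) (pd2 X s t) (pd2 (pd2 X) s t)

/-- `K₁ = det(Xs,Xt,Xss)·det(Xs,Xt,Xtt) - det(Xs,Xt,Xst)²`. -/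
def K1 (X : ℝ → ℝ → ℝ × ℝ × ℝ) (s t : ℝ) : ℝ :=
  det3 (pd1 X s t) (pd2 X s t) (pd1 (pd1 X) s t)
      * det3 (pd1 X s t) (pd2 X s t) (pd2 (pd2 X) s t)
    - det3 (pd1 X s t) (pd2 X s t) (pd2 (pd1 X) s t) ^ 2

/-- Mean curvature of a timelike surface (`ε = 1`, `W < 0`). -/
def Hmean (X : ℝ → ℝ → ℝ × ℝ × ℝ) (s t : ℝ) : ℝ :=
  -(1 / 2) * H1 X s t / (-(Wform X s t)) ^ ((3 : ℝ) / 2)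

/-- Gauss curvature `K = -K₁/W²`. -/
def Kcurv (X : ℝ → ℝ → ℝ × ℝ × ℝ) (s t : ℝ) : ℝ :=
  -(K1 X s t) / (Wform X s t) ^ 2


namespace Stmt17Aux

/-- The helicoidal surface. -/
def helX (h r lam mu θ : ℝ) : ℝ → ℝ → ℝ × ℝ × ℝ := fun s t =>
  (h * t,
    lam * Real.cosh t + mu * Real.sinh t + r * Real.cosh (s + t + θ),
    lam * Real.sinh t + mu * Real.cosh t + r * Real.sinh (s + t + θ))

lemma hpd1 (h r lam mu θ : ℝ) :
    pd1 (helX h r lam mu θ) = fun s t =>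
      (0, r * Real.sinh (s + t + θ), r * Real.cosh (s + t + θ)) := by
  funext s t
  have d1 : HasDerivAt (fun _ : ℝ => h * t) 0 s := hasDerivAt_const s _
  have d2 : HasDerivAt (fun u : ℝ =>
      lam * Real.cosh t + mu * Real.sinh t + r * Real.cosh (u + t + θ))
      (r * Real.sinh (s + t + θ)) s := by
    have := ((((hasDerivAt_id s).add_const t).add_const θ).cosh.const_mul r).const_add
      (lam * Real.cosh t + mu * Real.sinh t)
    simpa using this
  have d3 : HasDerivAt (fun u : ℝ =>
      lam * Real.sinh t + mu * Real.cosh t + r * Real.sinh (u + t + θ))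
      (r * Real.cosh (s + t + θ)) s := by
    have := ((((hasDerivAt_id s).add_const t).add_const θ).sinh.const_mul r).const_add
      (lam * Real.sinh t + mu * Real.cosh t)
    simpa using this
  exact (d1.prodMk (d2.prodMk d3)).deriv

lemma hpd2 (h r lam mu θ : ℝ) :
    pd2 (helX h r lam mu θ) = fun s t =>
      (h, lam * Real.sinh t + mu * Real.cosh t + r * Real.sinh (s + t + θ),
        lam * Real.cosh t + mu * Real.sinh t + r * Real.cosh (s + t + θ)) := by
  funext s t
  have d1 : HasDerivAt (fun u : ℝ => h * u) h t := by
    simpa using (hasDerivAt_id t).const_mul h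
  have d2 : HasDerivAt (fun u : ℝ =>
      lam * Real.cosh u + mu * Real.sinh u + r * Real.cosh (s + u + θ))
      (lam * Real.sinh t + mu * Real.cosh t + r * Real.sinh (s + t + θ)) t := by
    have h1 := (Real.hasDerivAt_cosh t).const_mul lam
    have h2 := (Real.hasDerivAt_sinh t).const_mul mu
    have h3 := ((((hasDerivAt_id t).const_add s).add_const θ).cosh.const_mul r)
    have := (h1.add h2).add h3
    simpa [Pi.add_def] using this
  have d3 : HasDerivAt (fun u : ℝ =>
      lam * Real.sinh u + mu * Real.cosh u + r * Real.sinh (s + u + θ))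
      (lam * Real.cosh t + mu * Real.sinh t + r * Real.cosh (s + t + θ)) t := by
    have h1 := (Real.hasDerivAt_sinh t).const_mul lam
    have h2 := (Real.hasDerivAt_cosh t).const_mul mu
    have h3 := ((((hasDerivAt_id t).const_add s).add_const θ).sinh.const_mul r)
    have := (h1.add h2).add h3
    simpa [Pi.add_def] using this
  exact (d1.prodMk (d2.prodMk d3)).deriv

lemma hpd11 (h r lam mu θ : ℝ) (s t : ℝ) :
    pd1 (pd1 (helX h r lam mu θ)) s t =
      (0, r * Real.cosh (s + t + θ), r * Real.sinh (s + t + θ)) := by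
  rw [hpd1]
  show deriv (fun u => ((0 : ℝ), r * Real.sinh (u + t + θ), r * Real.cosh (u + t + θ))) s = _
  have d1 : HasDerivAt (fun _ : ℝ => (0 : ℝ)) 0 s := hasDerivAt_const s _
  have d2 : HasDerivAt (fun u : ℝ => r * Real.sinh (u + t + θ))
      (r * Real.cosh (s + t + θ)) s := by
    simpa using (((hasDerivAt_id s).add_const t).add_const θ).sinh.const_mul r
  have d3 : HasDerivAt (fun u : ℝ => r * Real.cosh (u + t + θ))
      (r * Real.sinh (s + t + θ)) s := by
    simpa using (((hasDerivAt_id s).add_const t).add_const θ).cosh.const_mul r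
  exact (d1.prodMk (d2.prodMk d3)).deriv

lemma hpd21 (h r lam mu θ : ℝ) (s t : ℝ) :
    pd2 (pd1 (helX h r lam mu θ)) s t =
      (0, r * Real.cosh (s + t + θ), r * Real.sinh (s + t + θ)) := by
  rw [hpd1]
  show deriv (fun u => ((0 : ℝ), r * Real.sinh (s + u + θ), r * Real.cosh (s + u + θ))) t = _
  have d1 : HasDerivAt (fun _ : ℝ => (0 : ℝ)) 0 t := hasDerivAt_const t _
  have d2 : HasDerivAt (fun u : ℝ => r * Real.sinh (s + u + θ))
      (r * Real.cosh (s + t + θ)) t := by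
    simpa using (((hasDerivAt_id t).const_add s).add_const θ).sinh.const_mul r
  have d3 : HasDerivAt (fun u : ℝ => r * Real.cosh (s + u + θ))
      (r * Real.sinh (s + t + θ)) t := by
    simpa using (((hasDerivAt_id t).const_add s).add_const θ).cosh.const_mul r
  exact (d1.prodMk (d2.prodMk d3)).deriv

lemma hpd22 (h r lam mu θ : ℝ) (s t : ℝ) :
    pd2 (pd2 (helX h r lam mu θ)) s t =
      (0, lam * Real.cosh t + mu * Real.sinh t + r * Real.cosh (s + t + θ),
        lam * Real.sinh t + mu * Real.cosh t + r * Real.sinh (s + t + θ)) := by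
  rw [hpd2]
  show deriv (fun u => (h, lam * Real.sinh u + mu * Real.cosh u + r * Real.sinh (s + u + θ),
      lam * Real.cosh u + mu * Real.sinh u + r * Real.cosh (s + u + θ))) t = _
  have d1 : HasDerivAt (fun _ : ℝ => h) 0 t := hasDerivAt_const t _
  have d2 : HasDerivAt (fun u : ℝ =>
      lam * Real.sinh u + mu * Real.cosh u + r * Real.sinh (s + u + θ))
      (lam * Real.cosh t + mu * Real.sinh t + r * Real.cosh (s + t + θ)) t := by
    have h1 := (Real.hasDerivAt_sinh t).const_mul lam
    have h2 := (Real.hasDerivAt_cosh t).const_mul mu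
    have h3 := ((((hasDerivAt_id t).const_add s).add_const θ).sinh.const_mul r)
    simpa [Pi.add_def] using (h1.add h2).add h3
  have d3 : HasDerivAt (fun u : ℝ =>
      lam * Real.cosh u + mu * Real.sinh u + r * Real.cosh (s + u + θ))
      (lam * Real.sinh t + mu * Real.cosh t + r * Real.sinh (s + t + θ)) t := by
    have h1 := (Real.hasDerivAt_cosh t).const_mul lam
    have h2 := (Real.hasDerivAt_sinh t).const_mul mu
    have h3 := ((((hasDerivAt_id t).const_add s).add_const θ).cosh.const_mul r)
    simpa [Pi.add_def] using (h1.add h2).add h3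
  exact (d1.prodMk (d2.prodMk d3)).deriv

lemma key (h r lam mu θ : ℝ) (s t : ℝ) :
    H1 (helX h r lam mu θ) s t = h * r ^ 2 * (-lam ^ 2 + mu ^ 2 + h ^ 2
      - r * lam * Real.cosh (s + θ) + r * mu * Real.sinh (s + θ)) := by
  have e1 : pd1 (helX h r lam mu θ) s t =
      (0, r * Real.sinh (s + t + θ), r * Real.cosh (s + t + θ)) := by rw [hpd1]
  have e2 : pd2 (helX h r lam mu θ) s t =
      (h, lam * Real.sinh t + mu * Real.cosh t + r * Real.sinh (s + t + θ),
        lam * Real.cosh t + mu * Real.sinh t + r * Real.cosh (s + t + θ)) := by rw [hpd2]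
  rw [H1, Ecoef, Fcoef, Gcoef, e1, e2, hpd11, hpd21, hpd22]
  have hst : s + t + θ = (s + θ) + t := by ring
  rw [hst, Real.cosh_add, Real.sinh_add]
  simp only [mink, det3]
  linear_combination ((-1:ℝ)*h*r^2*mu^2*Real.sinh (s + θ)^2 + (1:ℝ)*h*r^2*mu^2*Real.cosh (s + θ)^2 + (1:ℝ)*h*r^2*mu^2*Real.sinh t^2*Real.sinh (s + θ)^2 + (-1:ℝ)*h*r^2*mu^2*Real.sinh t^2*Real.cosh (s + θ)^2 + (-1:ℝ)*h*r^2*mu^2*Real.cosh t^2*Real.sinh (s + θ)^2 + (1:ℝ)*h*r^2*mu^2*Real.cosh t^2*Real.cosh (s + θ)^2 + (1:ℝ)*h*r^2*lam^2*Real.sinh (s + θ)^2 + (-1:ℝ)*h*r^2*lam^2*Real.cosh (s + θ)^2 + (-1:ℝ)*h*r^2*lam^2*Real.sinh t^2*Real.sinh (s + θ)^2 + (1:ℝ)*h*r^2*lam^2*Real.sinh t^2*Real.cosh (s + θ)^2 + (1:ℝ)*h*r^2*lam^2*Real.cosh t^2*Real.sinh (s + θ)^2 + (-1:ℝ)*h*r^2*lam^2*Real.cosh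 t^2*Real.cosh (s + θ)^2 + (-1:ℝ)*h*r^3*mu*Real.sinh (s + θ)^3 + (1:ℝ)*h*r^3*mu*Real.cosh (s + θ)^2*Real.sinh (s + θ) + (1:ℝ)*h*r^3*mu*Real.sinh t^2*Real.sinh (s + θ)^3 + (-1:ℝ)*h*r^3*mu*Real.sinh t^2*Real.cosh (s + θ)^2*Real.sinh (s + θ) + (-1:ℝ)*h*r^3*mu*Real.cosh t^2*Real.sinh (s + θ)^3 + (1:ℝ)*h*r^3*mu*Real.cosh t^2*Real.cosh (s + θ)^2*Real.sinh (s + θ) + (1:ℝ)*h*r^3*lam*Real.cosh (s + θ)*Real.sinh (s + θ)^2 + (-1:ℝ)*h*r^3*lam*Real.cosh (s + θ)^3 + (-1:ℝ)*h*r^3*lam*Real.sinh t^2*Real.cosh (s + θ)*Real.sinh (s + θ)^2 + (1:ℝ)*h*r^3*lam*Real.sinh t^2*Real.cosh (s + θ)^3 + (1:ℝ)*h*r^3*lam*Real.cosh t^2*Real.cosh (s + θ)*Real.sinh (s + θ)^2 + (-1:ℝ)*h*r^3*lam*Real.cosh t^2*Real.cosh (s + θ)^3 + (-1:ℝ)*h^3*r^2*Real.sinh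 (s + θ)^2 + (1:ℝ)*h^3*r^2*Real.cosh (s + θ)^2) * (Real.cosh_sq_sub_sinh_sq t) + ((1:ℝ)*h*r^2*mu^2 + (-1:ℝ)*h*r^2*lam^2 + (1:ℝ)*h*r^3*mu*Real.sinh (s + θ) + (-1:ℝ)*h*r^3*lam*Real.cosh (s + θ) + (1:ℝ)*h^3*r^2) * (Real.cosh_sq_sub_sinh_sq (s + θ))

end Stmt17Aux

/-- For the helicoidal surface with spacelike axis generated by a Lorentzian circle,
the numerator of the mean curvature equals
`hr²(-λ² + μ² + h² - rλ cosh(s+θ) + rμ sinh(s+θ))`; consequently the surface is never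
minimal. -/
theorem stmt_17 (h r lam mu θ : ℝ) (hh : h ≠ 0) (hr : 0 < r) :
    let X : ℝ → ℝ → ℝ × ℝ × ℝ := fun s t =>
      (h * t,
        lam * Real.cosh t + mu * Real.sinh t + r * Real.cosh (s + t + θ),
        lam * Real.sinh t + mu * Real.cosh t + r * Real.sinh (s + t + θ))
    (∀ s t : ℝ,
        H1 X s t = h * r ^ 2 * (-lam ^ 2 + mu ^ 2 + h ^ 2
          - r * lam * Real.cosh (s + θ) + r * mu * Real.sinh (s + θ))) ∧
      ¬(∀ s t : ℝ, H1 X s t = 0) := by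
  intro X
  have hkey : ∀ s t : ℝ, H1 X s t = h * r ^ 2 * (-lam ^ 2 + mu ^ 2 + h ^ 2
      - r * lam * Real.cosh (s + θ) + r * mu * Real.sinh (s + θ)) :=
    fun s t => Stmt17Aux.key h r lam mu θ s t
  refine ⟨hkey, ?_⟩
  intro hzero
  have hq : ∀ s : ℝ, -lam ^ 2 + mu ^ 2 + h ^ 2
      - r * lam * Real.cosh (s + θ) + r * mu * Real.sinh (s + θ) = 0 := by
    intro s
    have := (hkey s 0).symm.trans (hzero s 0)
    have hhr : h * r ^ 2 ≠ 0 := mul_ne_zero hh (pow_ne_zero 2 (ne_of_gt hr))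
    exact (mul_eq_zero.mp this).resolve_left hhr
  have e0 := hq (-θ)
  have e1 := hq (1 - θ)
  have em := hq (-1 - θ)
  rw [show -θ + θ = 0 by ring] at e0
  rw [show 1 - θ + θ = 1 by ring] at e1
  rw [show -1 - θ + θ = -1 by ring] at em
  rw [Real.cosh_neg, Real.sinh_neg] at em
  rw [Real.cosh_zero, Real.sinh_zero] at e0
  have hc1 : 1 < Real.cosh 1 := Real.one_lt_cosh.mpr one_ne_zero
  have hs1 : 0 < Real.sinh 1 := Real.sinh_pos_iff.mpr one_pos
  -- From e1 - em : 2 r (mu sinh 1 - lam cosh 1 + lam) ... derive lam = 0, mu = 0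
  have hlam : lam = 0 := by
    have h2 : r * lam * (Real.cosh 1 - 1) = 0 := by linarith
    have := mul_eq_zero.mp h2
    rcases this with h3 | h3
    · rcases mul_eq_zero.mp h3 with h4 | h4
      · exact absurd h4 (ne_of_gt hr)
      · exact h4
    · linarith
  have hmu : mu = 0 := by
    have h2 : r * mu * Real.sinh 1 = 0 := by linarith
    rcases mul_eq_zero.mp h2 with h3 | h3
    · rcases mul_eq_zero.mp h3 with h4 | h4
      · exact absurd h4 (ne_of_gt hr)
      · exact h4
    · exact absurd h3 (ne_of_gt hs1)
  rw [hlam, hmu] at e0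
  have : h ^ 2 = 0 := by linarith
  exact hh (pow_eq_zero_iff (n := 2) (by norm_num) |>.mp this)
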